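/- The mechanism SVT_sum is ε-differentially private: for every pair of neighboring databases D ≈ D' and every possible transcript a (a finite sequence of Boolean comparison outcomes ending in the first 'yes' or, if none, consisting of all 'no's), Pr[SVT_sum run on D produces transcript a] ≤ e^{ε} · Pr[SVT_sum run on D' produces transcript a]; in particular the same multiplicative bound holds for the probability of each output in {0, 1}. -/

import Mathlib

open MeasureTheory Real
open scoped Classical

/-- `Lap b` : the Laplace distribution on `ℝ` with density
`x ↦ (1/(2b)) * exp (-|x|/b)` with respect to Lebesgue measure. -/
noncomputable def laplace (b : ℝ) : Measure ℝ :=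
  volume.withDensity (fun x => ENNReal.ofReal ((1 / (2 * b)) * Real.exp (-|x| / b)))

/-- The scaled truncated sum query `q_j(D) = (Σ_{v ∈ D, v ≤ 2^j} v) / 2^j`. -/
noncomputable def qj (D : Multiset ℤ) (j : ℕ) : ℝ :=
  ((D.filter (fun v => v ≤ (2 : ℤ) ^ j)).sum : ℝ) / (2 : ℝ) ^ j

/-- Truncate a list of comparison outcomes at (and including) the first `true`;
if there is no `true`, the whole list of `false`s is kept. -/
def firstYes : List Bool → List Bool
  | [] => []
  | b :: rest => if b then [true] else false :: firstYes rest

/-- All `2K` potential comparison outcomes of `SVT_sum` on database `D` with noise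
`(ρ, ν, ν')`: first the `K` phase-1 comparisons `q_j(D) + ν_j ≥ r/t_j + ρ`
(`t_j = 2^j`, `j = 1, …, K`), then the `K` phase-2 comparisons
`q_j(D) + ν'_j ≥ (l+1)/t_j + ρ`. -/
noncomputable def svtOutcomes (K : ℕ) (l r : ℝ) (D : Multiset ℤ)
    (ρ : ℝ) (ν ν' : Fin K → ℝ) : List Bool :=
  (List.ofFn fun j : Fin K =>
    decide (r / (2 : ℝ) ^ ((j : ℕ) + 1) + ρ ≤ qj D ((j : ℕ) + 1) + ν j)) ++
  (List.ofFn fun j : Fin K =>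
    decide ((l + 1) / (2 : ℝ) ^ ((j : ℕ) + 1) + ρ ≤ qj D ((j : ℕ) + 1) + ν' j))

/-- The transcript of `SVT_sum`: the sequence of comparison outcomes up to and
including the first `yes`, or all `no`s if no comparison succeeds. -/
noncomputable def svtTranscript (K : ℕ) (l r : ℝ) (D : Multiset ℤ)
    (ρ : ℝ) (ν ν' : Fin K → ℝ) : List Bool :=
  firstYes (svtOutcomes K l r D ρ ν ν')

/-- The output of `SVT_sum` determined by a transcript: output `1` (`true`) exactly
when the mechanism halted with a `yes` in phase 2 (transcript longer than `K` and
ending in `true`); otherwise output `0` (`false`). -/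
noncomputable def svtOutput (K : ℕ) (t : List Bool) : Bool :=
  decide (K < t.length ∧ t.getLast? = some true)

/-- The joint distribution of the noise of `SVT_sum`: `ρ ~ Lap(2/ε)` and the two
independent families `ν, ν'` of `K` i.i.d. `Lap(2/ε)` samples. -/
noncomputable def svtNoise (ε : ℝ) (K : ℕ) :
    Measure (ℝ × (Fin K → ℝ) × (Fin K → ℝ)) :=
  (laplace (2 / ε)).prod ((Measure.pi fun _ : Fin K => laplace (2 / ε)).prod
    (Measure.pi fun _ : Fin K => laplace (2 / ε)))


open scoped ENNReal NNReal

namespace SVTAux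


lemma firstYes_length_le : ∀ L : List Bool, (firstYes L).length ≤ L.length
  | [] => le_rfl
  | b :: rest => by
    by_cases hb : b <;> simp [firstYes, hb, Nat.succ_le_succ (firstYes_length_le rest)]

lemma firstYes_getElem? : ∀ (L : List Bool) (i : ℕ) (b : Bool),
    (firstYes L)[i]? = some b → L[i]? = some b
  | [], i, b => by simp [firstYes]
  | x :: rest, i, b => by
    by_cases hx : x
    · subst hx
      simp only [firstYes, if_pos]
      match i with
      | 0 => simp
      | (n+1) => simp
    · simp only [Bool.not_eq_true] at hx; subst hx
      simp only [firstYes, if_neg Bool.false_ne_true]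
      match i with
      | 0 => simp
      | (n+1) =>
        simp only [List.getElem?_cons_succ]
        exact firstYes_getElem? rest n b

lemma firstYes_true_last : ∀ (L : List Bool) (i : ℕ),
    (firstYes L)[i]? = some true →
    (firstYes L).length = i + 1 ∧ (firstYes L).getLast? = some true
  | [], i => by simp [firstYes]
  | x :: rest, i => by
    by_cases hx : x
    · subst hx
      simp only [firstYes, if_pos]
      match i with
      | 0 => simp
      | (n+1) => simp
    · simp only [Bool.not_eq_true] at hx; subst hx
      simp only [firstYes, if_neg Bool.false_ne_true]
      match i with
      | 0 => simp
      | (n+1) =>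
        intro h
        simp only [List.getElem?_cons_succ] at h
        obtain ⟨h1, h2⟩ := firstYes_true_last rest n h
        have hne : firstYes rest ≠ [] := by
          intro he; rw [he] at h; simp at h
        refine ⟨by simp [h1], ?_⟩
        rw [List.getLast?_cons, h2]; rfl

lemma firstYes_false_not_last : ∀ (L : List Bool) (i : ℕ),
    (firstYes L)[i]? = some false →
    ¬((firstYes L).length = i + 1 ∧ (firstYes L).getLast? = some true) := by
  intro L i h
  rintro ⟨h1, h2⟩
  rw [List.getLast?_eq_getElem?, h1] at h2
  simp only [Nat.add_sub_cancel] at h2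
  rw [h] at h2
  simp at h2

lemma firstYes_congr : ∀ (L L' : List Bool), L.length = L'.length →
    (∀ (i : ℕ) (b : Bool), (firstYes L)[i]? = some b → L'[i]? = some b) →
    firstYes L' = firstYes L
  | [], [], _, _ => rfl
  | x :: rest, y :: rest', hlen, h => by
    by_cases hx : x
    · subst hx
      have h0 := h 0 true (by simp [firstYes])
      simp only [List.getElem?_cons_zero, Option.some.injEq] at h0
      simp [firstYes, ← h0]
    · simp only [Bool.not_eq_true] at hx; subst hx
      have h0 := h 0 false (by simp [firstYes, List.getElem?_cons_zero])
      simp only [List.getElem?_cons_zero, Option.some.injEq] at h0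
      have hrec : firstYes rest' = firstYes rest := by
        refine firstYes_congr rest rest' (by simpa using hlen) ?_
        intro i b hb
        have := h (i+1) b (by simpa [firstYes, List.getElem?_cons_succ] using hb)
        simpa using this
      simp [firstYes, ← h0, hrec]


lemma qj_cons (v : ℤ) (D : Multiset ℤ) (j : ℕ) :
    qj (v ::ₘ D) j = qj D j + (if v ≤ (2:ℤ)^j then (v:ℝ) else 0) / 2^j := by
  unfold qj
  rw [Multiset.filter_cons]
  by_cases h : v ≤ (2:ℤ)^j
  · simp only [if_pos h, Multiset.sum_add, Multiset.sum_singleton]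
    push_cast
    ring
  · simp only [if_neg h]
    simp

lemma qj_le_cons {v : ℤ} (hv : 0 ≤ v) (D : Multiset ℤ) (j : ℕ) :
    qj D j ≤ qj (v ::ₘ D) j := by
  rw [qj_cons]
  have h2 : (0:ℝ) < 2 ^ j := by positivity
  have : (0:ℝ) ≤ (if v ≤ (2:ℤ)^j then (v:ℝ) else 0) / 2^j := by
    apply div_nonneg _ h2.le
    split_ifs
    · exact_mod_cast hv
    · exact le_refl 0
  linarith

lemma cons_le_qj_add {v : ℤ} (hv : 0 ≤ v) (D : Multiset ℤ) (j : ℕ) :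
    qj (v ::ₘ D) j ≤ qj D j + 1 := by
  rw [qj_cons]
  have h2 : (0:ℝ) < 2 ^ j := by positivity
  have : (if v ≤ (2:ℤ)^j then (v:ℝ) else 0) / 2^j ≤ 1 := by
    rw [div_le_one h2]
    split_ifs with h
    · have : (v:ℝ) ≤ ((2:ℤ)^j : ℤ) := by exact_mod_cast h
      push_cast at this ⊢
      linarith
    · positivity
  linarith


noncomputable def lapDen (b x : ℝ) : ℝ≥0∞ :=
  ENNReal.ofReal ((1 / (2 * b)) * Real.exp (-|x| / b))

lemma laplace_eq (b : ℝ) : laplace b = volume.withDensity (lapDen b) := rfl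

instance sigmaFinite_laplace (b : ℝ) : SigmaFinite (laplace b) := by
  rw [laplace_eq]; unfold lapDen; exact SigmaFinite.withDensity_ofReal _

lemma measurable_lapDen (b : ℝ) : Measurable (lapDen b) := by
  apply Measurable.ennreal_ofReal
  fun_prop

lemma lapDen_shift {b : ℝ} (hb : 0 < b) (c x : ℝ) :
    lapDen b (x - c) ≤ ENNReal.ofReal (Real.exp (|c| / b)) * lapDen b x := by
  unfold lapDen
  rw [← ENNReal.ofReal_mul (exp_nonneg _)]
  apply ENNReal.ofReal_le_ofReal
  have h0 : (0:ℝ) ≤ 1 / (2 * b) := by positivity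
  have habs : |x| - |x - c| ≤ |c| := by
    have := abs_sub_abs_le_abs_sub x (x - c)
    simpa using this
  have h1 : Real.exp (-|x - c| / b) ≤ Real.exp (|c| / b) * Real.exp (-|x| / b) := by
    rw [← Real.exp_add]
    apply Real.exp_le_exp.mpr
    rw [← add_div]
    gcongr
    linarith
  calc 1 / (2 * b) * Real.exp (-|x - c| / b)
      ≤ 1 / (2 * b) * (Real.exp (|c| / b) * Real.exp (-|x| / b)) := by
        exact mul_le_mul_of_nonneg_left h1 h0
    _ = Real.exp (|c| / b) * (1 / (2 * b) * Real.exp (-|x| / b)) := by ring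

lemma map_add_laplace (b c : ℝ) :
    Measure.map (· + c) (laplace b) = volume.withDensity (fun x => lapDen b (x - c)) := by
  have hm : Measurable fun x => lapDen b (x - c) :=
    (measurable_lapDen b).comp (measurable_sub_const c)
  ext s hs
  rw [Measure.map_apply (measurable_add_const c) hs, laplace_eq,
    withDensity_apply _ (hs.preimage (measurable_add_const c)), withDensity_apply _ hs]
  conv_rhs => rw [show (volume : Measure ℝ) = Measure.map (· + c) volume from
    (map_add_right_eq_self volume c).symm]
  rw [setLIntegral_map hs hm (measurable_add_const c)]
  simp

instance sigmaFinite_shift (b c : ℝ) :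
    SigmaFinite (volume.withDensity (fun x => lapDen b (x - c))) := by
  unfold lapDen
  exact SigmaFinite.withDensity_ofReal _

instance sigmaFinite_map_add (b c : ℝ) : SigmaFinite (Measure.map (· + c) (laplace b)) := by
  rw [map_add_laplace]; infer_instance

lemma map_add_laplace_le {b : ℝ} (hb : 0 < b) (c : ℝ) :
    Measure.map (· + c) (laplace b) ≤ ENNReal.ofReal (Real.exp (|c| / b)) • laplace b := by
  rw [map_add_laplace, laplace_eq, ← withDensity_smul _ (measurable_lapDen b)]
  exact withDensity_mono (Filter.Eventually.of_forall fun x => lapDen_shift hb c x)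

lemma pi_map_add {K : ℕ} (b : ℝ) (s : Fin K → ℝ) :
    Measure.map (· + s) (Measure.pi fun _ : Fin K => laplace b) =
      Measure.pi (fun i => Measure.map (· + s i) (laplace b)) := by
  refine (Measure.pi_eq fun t ht => ?_).symm
  have hmeas : Measurable (fun x : Fin K → ℝ => x + s) :=
    measurable_pi_lambda _ fun i => (measurable_pi_apply i).add_const _
  rw [Measure.map_apply hmeas (MeasurableSet.univ_pi ht)]
  have hpre : (fun x : Fin K → ℝ => x + s) ⁻¹' (Set.pi Set.univ t) =
      Set.pi Set.univ (fun i => (· + s i) ⁻¹' (t i)) := by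
    ext x; simp [Set.mem_pi]
  rw [hpre, Measure.pi_pi]
  exact Finset.prod_congr rfl fun i _ =>
    (Measure.map_apply (measurable_add_const (s i)) (ht i)).symm

lemma prod_mono {α β : Type*} [MeasurableSpace α] [MeasurableSpace β]
    {μ₁ μ₂ : Measure α} {ν₁ ν₂ : Measure β} [SFinite ν₁] [SFinite ν₂]
    (h1 : μ₁ ≤ μ₂) (h2 : ν₁ ≤ ν₂) : μ₁.prod ν₁ ≤ μ₂.prod ν₂ := by
  rw [Measure.le_iff]
  intro s hs
  rw [Measure.prod_apply hs, Measure.prod_apply hs]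
  exact lintegral_mono' h1 fun x => Measure.le_iff'.mp h2 _

universe u in
lemma pi_mono : ∀ {n : ℕ} {α : Fin n → Type u} [∀ i, MeasurableSpace (α i)]
    (μ ν : ∀ i, Measure (α i)) [∀ i, SigmaFinite (μ i)] [∀ i, SigmaFinite (ν i)],
    (∀ i, μ i ≤ ν i) → Measure.pi μ ≤ Measure.pi ν
  | 0, α, _, μ, ν, _, _, h => by
    rw [Measure.le_iff]
    intro s hs
    rcases s.eq_empty_or_nonempty with rfl | ⟨x, hx⟩
    · simp
    · have hsu : s = Set.univ := Set.eq_univ_iff_forall.mpr fun y => Subsingleton.elim x y ▸ hx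
      subst hsu
      simp [Measure.pi_univ]
  | (n+1), α, _, μ, ν, _, _, h => by
    have hμ := measurePreserving_piFinSuccAbove μ 0
    have hν := measurePreserving_piFinSuccAbove ν 0
    have step := Measure.map_mono
      (μ := (μ 0).prod <| Measure.pi fun j => μ ((0 : Fin (n+1)).succAbove j))
      (ν := (ν 0).prod <| Measure.pi fun j => ν ((0 : Fin (n+1)).succAbove j))
      (prod_mono (h 0) (pi_mono _ _ fun j => h _))
      (MeasurableEquiv.piFinSuccAbove α 0).symm.measurable
    rw [(hμ.symm _).map_eq, (hν.symm _).map_eq] at step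
    exact step

lemma ofReal_smul_measure {α : Type*} [MeasurableSpace α] (x : ℝ) (μ : Measure α) :
    ENNReal.ofReal x • μ = x.toNNReal • μ := rfl

lemma pi_smul {K : ℕ} (k : Fin K → ℝ≥0) (μ : Fin K → Measure ℝ) [∀ i, SigmaFinite (μ i)] :
    Measure.pi (fun i => k i • μ i) = (∏ i, k i) • Measure.pi μ := by
  refine Measure.pi_eq fun t ht => ?_
  rw [Measure.smul_apply, Measure.pi_pi]
  simp only [Measure.smul_apply, ENNReal.smul_def, smul_eq_mul, ENNReal.coe_finset_prod, Finset.prod_mul_distrib]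

lemma pi_map_add_le {b : ℝ} (hb : 0 < b) {K : ℕ} (s : Fin K → ℝ) :
    Measure.map (· + s) (Measure.pi fun _ : Fin K => laplace b) ≤
      ENNReal.ofReal (Real.exp ((∑ i, |s i|) / b)) • Measure.pi (fun _ : Fin K => laplace b) := by
  rw [pi_map_add]
  have hk : ∀ i : Fin K, Measure.map (· + s i) (laplace b) ≤
      (Real.exp (|s i| / b)).toNNReal • laplace b := by
    intro i
    have := map_add_laplace_le hb (s i)
    rwa [ofReal_smul_measure] at this
  calc Measure.pi (fun i => Measure.map (· + s i) (laplace b))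
      ≤ Measure.pi (fun i => (Real.exp (|s i| / b)).toNNReal • laplace b) :=
        pi_mono _ _ fun i => hk i
    _ = (∏ i, (Real.exp (|s i| / b)).toNNReal) • Measure.pi (fun _ => laplace b) :=
        pi_smul _ _
    _ = ENNReal.ofReal (Real.exp ((∑ i, |s i|) / b)) • Measure.pi (fun _ => laplace b) := by
        rw [ofReal_smul_measure]
        congr 1
        have : ∀ i : Fin K, (0:ℝ) ≤ Real.exp (|s i| / b) := fun i => (exp_pos _).le
        rw [← Real.toNNReal_prod_of_nonneg (fun i _ => this i), ← Real.exp_sum]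
        congr 1
        rw [Finset.sum_div]


lemma prod_le_smul {α β : Type*} [MeasurableSpace α] [MeasurableSpace β]
    {μ₁ μ₂ : Measure α} {ν₁ ν₂ : Measure β} [SFinite ν₁] [SFinite ν₂]
    (k₁ k₂ : ℝ≥0∞) (hk₂ : k₂ ≠ ∞)
    (h1 : μ₁ ≤ k₁ • μ₂) (h2 : ν₁ ≤ k₂ • ν₂) : μ₁.prod ν₁ ≤ (k₁ * k₂) • μ₂.prod ν₂ := by
  rw [Measure.le_iff]
  intro s hs
  rw [Measure.prod_apply hs, Measure.smul_apply, Measure.prod_apply hs, smul_eq_mul]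
  calc ∫⁻ x, ν₁ (Prod.mk x ⁻¹' s) ∂μ₁
      ≤ ∫⁻ x, k₂ * ν₂ (Prod.mk x ⁻¹' s) ∂(k₁ • μ₂) := by
        refine lintegral_mono' h1 fun x => ?_
        have := Measure.le_iff'.mp h2 (Prod.mk x ⁻¹' s)
        simpa [Measure.smul_apply, smul_eq_mul] using this
    _ = k₁ * (k₂ * ∫⁻ x, ν₂ (Prod.mk x ⁻¹' s) ∂μ₂) := by
        rw [lintegral_smul_measure, lintegral_const_mul' _ _ hk₂, smul_eq_mul]
    _ = k₁ * k₂ * ∫⁻ x, ν₂ (Prod.mk x ⁻¹' s) ∂μ₂ := by ring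

lemma ofReal_exp_mul (x y : ℝ) :
    ENNReal.ofReal (rexp x) * ENNReal.ofReal (rexp y) = ENNReal.ofReal (rexp (x + y)) := by
  rw [Real.exp_add, ENNReal.ofReal_mul (exp_nonneg _)]

lemma noise_map_le {b : ℝ} (hb : 0 < b) {K : ℕ} (c : ℝ) (s s' : Fin K → ℝ) :
    Measure.map (Prod.map (· + c) (Prod.map (· + s) (· + s')))
        ((laplace b).prod ((Measure.pi fun _ : Fin K => laplace b).prod
          (Measure.pi fun _ : Fin K => laplace b))) ≤
      ENNReal.ofReal (Real.exp ((|c| + ((∑ i, |s i|) + ∑ i, |s' i|)) / b)) •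
        ((laplace b).prod ((Measure.pi fun _ : Fin K => laplace b).prod
          (Measure.pi fun _ : Fin K => laplace b))) := by
  have hms : Measurable (fun x : Fin K → ℝ => x + s) :=
    measurable_pi_lambda _ fun i => (measurable_pi_apply i).add_const _
  have hms' : Measurable (fun x : Fin K → ℝ => x + s') :=
    measurable_pi_lambda _ fun i => (measurable_pi_apply i).add_const _
  rw [← Measure.map_prod_map _ _ (measurable_add_const c) (hms.prodMap hms'),
    ← Measure.map_prod_map _ _ hms hms']
  have inner := prod_le_smul _ _ ENNReal.ofReal_ne_top
    (pi_map_add_le hb s) (pi_map_add_le hb s')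
  have key := prod_le_smul _ _ (by finiteness)
    (map_add_laplace_le hb c) inner
  refine key.trans (le_of_eq ?_)
  congr 1
  rw [ofReal_exp_mul, ofReal_exp_mul]
  congr 1
  field_simp

lemma apply_le {Ω : Type*} [MeasurableSpace Ω] {μ : Measure Ω} {T : Ω → Ω} (hT : Measurable T)
    {k : ℝ≥0∞} (hμ : Measure.map T μ ≤ k • μ) {A B : Set Ω} (hB : MeasurableSet B)
    (hAB : A ⊆ T ⁻¹' B) : μ A ≤ k * μ B := by
  calc μ A ≤ μ (T ⁻¹' B) := measure_mono hAB
    _ = Measure.map T μ B := (Measure.map_apply hT hB).symm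
    _ ≤ (k • μ) B := Measure.le_iff'.mp hμ B
    _ = k * μ B := by simp [Measure.smul_apply, smul_eq_mul]


noncomputable def yesShift (K : ℕ) (off : ℕ) (a : List Bool) : Fin K → ℝ :=
  fun i => if a.length = off + (i : ℕ) + 1 ∧ a.getLast? = some true then 1 else 0

lemma sum_abs_yesShift (K : ℕ) (a : List Bool) :
    (∑ i : Fin K, |yesShift K 0 a i|) + (∑ i : Fin K, |yesShift K K a i|) ≤ 1 := by
  have habs : ∀ (off : ℕ) (i : Fin K), |yesShift K off a i| =
      if a.length = off + (i : ℕ) + 1 ∧ a.getLast? = some true then (1:ℝ) else 0 := by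
    intro off i; unfold yesShift; split_ifs <;> norm_num
  simp only [habs]
  rw [Finset.sum_boole, Finset.sum_boole]
  by_cases hKn : a.length ≤ K
  · have h2 : (Finset.univ.filter
        (fun i : Fin K => a.length = K + (i : ℕ) + 1 ∧ a.getLast? = some true)) = ∅ := by
      ext i
      simp only [Finset.mem_filter, Finset.mem_univ, true_and, Finset.notMem_empty, iff_false]
      rintro ⟨h, -⟩; omega
    have h1 : (Finset.univ.filter
        (fun i : Fin K => a.length = 0 + (i : ℕ) + 1 ∧ a.getLast? = some true)).card ≤ 1 := by
      refine Finset.card_le_one.mpr fun i hi j hj => ?_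
      simp only [Finset.mem_filter] at hi hj
      have h1 := hi.2.1; have h2 := hj.2.1
      exact Fin.ext (by omega)
    rw [h2]
    simp only [Finset.card_empty, Nat.cast_zero, add_zero]
    exact_mod_cast h1
  · have h2 : (Finset.univ.filter
        (fun i : Fin K => a.length = 0 + (i : ℕ) + 1 ∧ a.getLast? = some true)) = ∅ := by
      ext i
      simp only [Finset.mem_filter, Finset.mem_univ, true_and, Finset.notMem_empty, iff_false]
      rintro ⟨h, -⟩
      have := i.isLt; omega
    have h1 : (Finset.univ.filter
        (fun i : Fin K => a.length = K + (i : ℕ) + 1 ∧ a.getLast? = some true)).card ≤ 1 := by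
      refine Finset.card_le_one.mpr fun i hi j hj => ?_
      simp only [Finset.mem_filter] at hi hj
      have h1 := hi.2.1; have h2 := hj.2.1
      exact Fin.ext (by omega)
    rw [h2]
    simp only [Finset.card_empty, Nat.cast_zero, zero_add]
    exact_mod_cast h1

lemma getElem?_ofFn' {α : Type*} {n : ℕ} (f : Fin n → α) (i : ℕ) (h : i < n) :
    (List.ofFn f)[i]? = some (f ⟨i, h⟩) := by
  rw [List.getElem?_ofFn]
  simp [h]

lemma svtOutcomes_length (K : ℕ) (l r : ℝ) (D : Multiset ℤ) (ρ : ℝ) (ν ν' : Fin K → ℝ) :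
    (svtOutcomes K l r D ρ ν ν').length = K + K := by
  simp [svtOutcomes]

lemma svtOutcomes_getElem_lt {K : ℕ} {l r : ℝ} {D : Multiset ℤ} {ρ : ℝ} {ν ν' : Fin K → ℝ}
    {i : ℕ} (h : i < K) :
    (svtOutcomes K l r D ρ ν ν')[i]? =
      some (decide (r / (2 : ℝ) ^ (i + 1) + ρ ≤ qj D (i + 1) + ν ⟨i, h⟩)) := by
  unfold svtOutcomes
  rw [List.getElem?_append, if_pos (by simpa using h), getElem?_ofFn']

lemma svtOutcomes_getElem_ge {K : ℕ} {l r : ℝ} {D : Multiset ℤ} {ρ : ℝ} {ν ν' : Fin K → ℝ}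
    {i : ℕ} (h : K ≤ i) (h2 : i < K + K) :
    (svtOutcomes K l r D ρ ν ν')[i]? =
      some (decide ((l + 1) / (2 : ℝ) ^ ((i - K) + 1) + ρ ≤ qj D ((i - K) + 1) +
        ν' ⟨i - K, by omega⟩)) := by
  unfold svtOutcomes
  rw [List.getElem?_append_right (by simpa using h)]
  rw [List.length_ofFn]
  rw [getElem?_ofFn' _ _ (by omega)]

lemma transcript_transfer (K : ℕ) (l r : ℝ) (D D' : Multiset ℤ) (c : ℝ)
    (hA : ∀ j : ℕ, qj D' j ≤ qj D j + c)
    (hB : ∀ j : ℕ, qj D j ≤ qj D' j + (1 - c))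
    (ρ : ℝ) (ν ν' : Fin K → ℝ) (a : List Bool)
    (ha : svtTranscript K l r D ρ ν ν' = a) :
    svtTranscript K l r D' (ρ + c) (ν + yesShift K 0 a) (ν' + yesShift K K a) = a := by
  subst ha
  unfold svtTranscript
  set L := svtOutcomes K l r D ρ ν ν' with hLdef
  apply firstYes_congr
  · rw [svtOutcomes_length, svtOutcomes_length]
  · intro i b hb
    have hiL : L[i]? = some b := firstYes_getElem? L i b hb
    have hilen : i < L.length := by
      by_contra hc
      rw [List.getElem?_eq_none (by omega)] at hiL
      cases hiL
    rw [svtOutcomes_length] at hilen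
    by_cases hiK : i < K
    · rw [svtOutcomes_getElem_lt hiK] at hiL ⊢
      have hν : (ν + yesShift K 0 (firstYes L)) ⟨i, hiK⟩ =
          ν ⟨i, hiK⟩ + yesShift K 0 (firstYes L) ⟨i, hiK⟩ := rfl
      rw [hν]
      cases b with
      | false =>
        have hno : ¬(r / (2 : ℝ) ^ (i + 1) + ρ ≤ qj D (i + 1) + ν ⟨i, hiK⟩) := by
          simpa using hiL
        have hshift : yesShift K 0 (firstYes L) ⟨i, hiK⟩ = 0 := by
          unfold yesShift
          rw [if_neg]
          intro hcon
          exact firstYes_false_not_last L i hb (by simpa using hcon)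
        rw [hshift]
        have := hA (i + 1)
        simp only [Option.some.injEq, decide_eq_false_iff_not]
        intro hcon
        apply hno
        linarith
      | true =>
        have hyes : r / (2 : ℝ) ^ (i + 1) + ρ ≤ qj D (i + 1) + ν ⟨i, hiK⟩ := by
          simpa using hiL
        have hlast := firstYes_true_last L i hb
        have hshift : yesShift K 0 (firstYes L) ⟨i, hiK⟩ = 1 := by
          unfold yesShift
          rw [if_pos (by simpa using hlast)]
        rw [hshift]
        have := hB (i + 1)
        simp only [Option.some.injEq, decide_eq_true_eq]
        linarith
    · have hKi : K ≤ i := by omega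
      rw [svtOutcomes_getElem_ge hKi hilen] at hiL ⊢
      have hν : (ν' + yesShift K K (firstYes L)) ⟨i - K, by omega⟩ =
          ν' ⟨i - K, by omega⟩ + yesShift K K (firstYes L) ⟨i - K, by omega⟩ := rfl
      rw [hν]
      cases b with
      | false =>
        have hno : ¬((l + 1) / (2 : ℝ) ^ ((i - K) + 1) + ρ ≤
            qj D ((i - K) + 1) + ν' ⟨i - K, by omega⟩) := by
          simpa using hiL
        have hshift : yesShift K K (firstYes L) ⟨i - K, by omega⟩ = 0 := by
          unfold yesShift
          rw [if_neg]
          intro hcon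
          apply firstYes_false_not_last L i hb
          refine ⟨?_, hcon.2⟩
          have := hcon.1
          simp only at this
          omega
        rw [hshift]
        have := hA ((i - K) + 1)
        simp only [Option.some.injEq, decide_eq_false_iff_not]
        intro hcon
        apply hno
        linarith
      | true =>
        have hyes : (l + 1) / (2 : ℝ) ^ ((i - K) + 1) + ρ ≤
            qj D ((i - K) + 1) + ν' ⟨i - K, by omega⟩ := by
          simpa using hiL
        have hlast := firstYes_true_last L i hb
        have hshift : yesShift K K (firstYes L) ⟨i - K, by omega⟩ = 1 := by
          unfold yesShift
          rw [if_pos]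
          refine ⟨?_, hlast.2⟩
          have := hlast.1
          simp only
          omega
        rw [hshift]
        have := hB ((i - K) + 1)
        simp only [Option.some.injEq, decide_eq_true_eq]
        linarith



lemma measurable_decide {Ω : Type*} [MeasurableSpace Ω] {P : Ω → Prop}
    (h : MeasurableSet {ω | P ω}) : Measurable (fun ω => decide (P ω)) := by
  apply measurable_to_countable'
  intro b
  cases b
  · convert h.compl using 1
    ext ω
    simp [Set.mem_preimage]
  · convert h using 1
    ext ω
    simp [Set.mem_preimage]

lemma measurable_transcript_set (K : ℕ) (l r : ℝ) (D : Multiset ℤ) (a : List Bool) :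
    MeasurableSet {ω : ℝ × (Fin K → ℝ) × (Fin K → ℝ) |
      svtTranscript K l r D ω.1 ω.2.1 ω.2.2 = a} := by
  have hF : Measurable (fun ω : ℝ × (Fin K → ℝ) × (Fin K → ℝ) =>
      ((fun j : Fin K => decide (r / (2:ℝ) ^ ((j:ℕ)+1) + ω.1 ≤ qj D ((j:ℕ)+1) + ω.2.1 j)),
       (fun j : Fin K => decide ((l+1) / (2:ℝ) ^ ((j:ℕ)+1) + ω.1 ≤ qj D ((j:ℕ)+1) + ω.2.2 j)))) := by
    apply Measurable.prod
    · apply measurable_pi_lambda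
      intro j
      apply measurable_decide
      apply measurableSet_le
      · exact measurable_fst.const_add _
      · exact (((measurable_pi_apply j).comp (measurable_fst.comp measurable_snd)).const_add _)
    · apply measurable_pi_lambda
      intro j
      apply measurable_decide
      apply measurableSet_le
      · exact measurable_fst.const_add _
      · exact (((measurable_pi_apply j).comp (measurable_snd.comp measurable_snd)).const_add _)
  exact hF (Set.to_countable
    {p : (Fin K → Bool) × (Fin K → Bool) | firstYes (List.ofFn p.1 ++ List.ofFn p.2) = a}).measurableSet

end SVTAux

/-- `SVT_sum` is `ε`-differentially private: for neighboring databases `D ≈ D'`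
(finite multisets of integers in `{0, …, 2^K}` differing by insertion of one
element) and every transcript `a`,
`Pr[SVT_sum(D) has transcript a] ≤ e^ε · Pr[SVT_sum(D') has transcript a]`,
and the same multiplicative bound holds for each output in `{0, 1}`. -/
theorem svtsum_is_DP (ε : ℝ) (hε : 0 < ε) (K : ℕ) (hK : 1 ≤ K) (l r : ℝ) (hlr : l < r)
    (D D' : Multiset ℤ)
    (hD : ∀ v ∈ D, 0 ≤ v ∧ v ≤ 2 ^ K) (hD' : ∀ v ∈ D', 0 ≤ v ∧ v ≤ 2 ^ K)
    (hnb : (∃ a : ℤ, D' = a ::ₘ D) ∨ (∃ a : ℤ, D = a ::ₘ D')) :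
    (∀ a : List Bool,
      svtNoise ε K {ω | svtTranscript K l r D ω.1 ω.2.1 ω.2.2 = a} ≤
        ENNReal.ofReal (Real.exp ε) *
          svtNoise ε K {ω | svtTranscript K l r D' ω.1 ω.2.1 ω.2.2 = a}) ∧
    (∀ o : Bool,
      svtNoise ε K {ω | svtOutput K (svtTranscript K l r D ω.1 ω.2.1 ω.2.2) = o} ≤
        ENNReal.ofReal (Real.exp ε) *
          svtNoise ε K {ω | svtOutput K (svtTranscript K l r D' ω.1 ω.2.1 ω.2.2) = o}) := by
  classical
  open SVTAux in
  have hb : (0:ℝ) < 2/ε := by positivity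
  obtain ⟨c, hc01, hA, hB⟩ : ∃ c : ℝ, |c| ≤ 1 ∧ (∀ j : ℕ, qj D' j ≤ qj D j + c) ∧
      (∀ j : ℕ, qj D j ≤ qj D' j + (1 - c)) := by
    rcases hnb with ⟨v, rfl⟩ | ⟨v, rfl⟩
    · have hv : (0:ℤ) ≤ v := (hD' v (Multiset.mem_cons_self v D)).1
      refine ⟨1, by norm_num, fun j => cons_le_qj_add hv D j, fun j => ?_⟩
      have := qj_le_cons hv D j
      linarith
    · have hv : (0:ℤ) ≤ v := (hD v (Multiset.mem_cons_self v D')).1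
      refine ⟨0, by norm_num, fun j => ?_, fun j => ?_⟩
      · have := qj_le_cons hv D' j
        linarith
      · have := cons_le_qj_add hv D' j
        linarith
  have key : ∀ a : List Bool,
      svtNoise ε K {ω | svtTranscript K l r D ω.1 ω.2.1 ω.2.2 = a} ≤
        ENNReal.ofReal (Real.exp ε) *
          svtNoise ε K {ω | svtTranscript K l r D' ω.1 ω.2.1 ω.2.2 = a} := by
    intro a
    set s : Fin K → ℝ := yesShift K 0 a with hs
    set s' : Fin K → ℝ := yesShift K K a with hs'
    have hms : Measurable (fun x : Fin K → ℝ => x + s) :=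
      measurable_pi_lambda _ fun i => (measurable_pi_apply i).add_const _
    have hms' : Measurable (fun x : Fin K → ℝ => x + s') :=
      measurable_pi_lambda _ fun i => (measurable_pi_apply i).add_const _
    have hT : Measurable (Prod.map (· + c) (Prod.map (fun x : Fin K → ℝ => x + s)
        (fun x : Fin K → ℝ => x + s'))) :=
      (measurable_add_const c).prodMap (hms.prodMap hms')
    have hmap := noise_map_le hb c s s'
    have happ := apply_le hT hmap (measurable_transcript_set K l r D' a)
      (fun ω hω => transcript_transfer K l r D D' c hA hB ω.1 ω.2.1 ω.2.2 a hω)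
    refine happ.trans ?_
    apply mul_le_mul_left
    apply ENNReal.ofReal_le_ofReal
    apply Real.exp_le_exp.mpr
    rw [div_le_iff₀ hb]
    have h2 : ε * (2/ε) = 2 := by field_simp
    rw [h2]
    have := sum_abs_yesShift K a
    linarith
  refine ⟨key, ?_⟩
  intro o
  have hcov : ∀ (E : Multiset ℤ),
      {ω : ℝ × (Fin K → ℝ) × (Fin K → ℝ) | svtOutput K (svtTranscript K l r E ω.1 ω.2.1 ω.2.2) = o}
        = ⋃ (a : {a : List Bool // svtOutput K a = o}),
            {ω | svtTranscript K l r E ω.1 ω.2.1 ω.2.2 = (a : List Bool)} := by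
    intro E
    ext ω
    simp only [Set.mem_setOf_eq, Set.mem_iUnion]
    constructor
    · intro h
      exact ⟨⟨svtTranscript K l r E ω.1 ω.2.1 ω.2.2, h⟩, rfl⟩
    · rintro ⟨⟨a, ha⟩, h⟩
      rw [h]
      exact ha
  have hmeas : ∀ (E : Multiset ℤ) (a : List Bool),
      MeasurableSet {ω : ℝ × (Fin K → ℝ) × (Fin K → ℝ) |
        svtTranscript K l r E ω.1 ω.2.1 ω.2.2 = a} := fun E a =>
    measurable_transcript_set K l r E a
  have hdisj : ∀ (E : Multiset ℤ), Pairwise (Function.onFun Disjoint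
      (fun (a : {a : List Bool // svtOutput K a = o}) =>
        {ω : ℝ × (Fin K → ℝ) × (Fin K → ℝ) |
          svtTranscript K l r E ω.1 ω.2.1 ω.2.2 = (a : List Bool)})) := by
    intro E a b hab
    refine Set.disjoint_left.mpr fun ω h1 h2 => ?_
    exact hab (Subtype.ext (h1.symm.trans h2))
  rw [hcov D, hcov D', measure_iUnion (hdisj D) (fun a => hmeas D _),
    measure_iUnion (hdisj D') (fun a => hmeas D' _), ← ENNReal.tsum_mul_left]
  exact ENNReal.tsum_le_tsum fun a => key a
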